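/- If (a,b,c,d) solves the invariance equations for parameter k, then every eigenvalue ξ of the 2×2 matrix M = [[0,1],[-Ω₁²,-Γ₁]], with Ω₁² = ω₁²+k(1-a) and Γ₁ = γ₁-kb, is also an eigenvalue of the 4×4 matrix Q(k). -/

import Mathlib

open Polynomial

theorem my_det_fin_four {R : Type*} [CommRing R] (A : Matrix (Fin 4) (Fin 4) R) :
    A.det = A 0 0*A 1 1*A 2 2*A 3 3 - A 0 0*A 1 1*A 2 3*A 3 2 - A 0 0*A 1 2*A 2 1*A 3 3 + A 0 0*A 1 2*A 2 3*A 3 1 + A 0 0*A 1 3*A 2 1*A 3 2 - A 0 0*A 1 3*A 2 2*A 3 1 - A 0 1*A 1 0*A 2 2*A 3 3 + A 0 1*A 1 0*A 2 3*A 3 2 + A 0 1*A 1 2*A 2 0*A 3 3 - A 0 1*A 1 2*A 2 3*A 3 0 - A 0 1*A 1 3*A 2 0*A 3 2 + A 0 1*A 1 3*A 2 2*A 3 0 + A 0 2*A 1 0*A 2 1*A 3 3 - A 0 2*A 1 0*A 2 3*A 3 1 - A 0 2*A 1 1*A 2 0*A 3 3 + A 0 2*A 1 1*A 2 3*A 3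 0 + A 0 2*A 1 3*A 2 0*A 3 1 - A 0 2*A 1 3*A 2 1*A 3 0 - A 0 3*A 1 0*A 2 1*A 3 2 + A 0 3*A 1 0*A 2 2*A 3 1 + A 0 3*A 1 1*A 2 0*A 3 2 - A 0 3*A 1 1*A 2 2*A 3 0 - A 0 3*A 1 2*A 2 0*A 3 1 + A 0 3*A 1 2*A 2 1*A 3 0 := by
  rw [Matrix.det_succ_row_zero]
  simp [Fin.sum_univ_succ, Matrix.det_fin_three, Matrix.submatrix_apply, Fin.succAbove]
  ring

theorem eigenvalues_of_reduced_matrix_are_eigenvalues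
    (γ₁ γ₂ ω₁ ω₂ k : ℝ) (a b c d : ℝ)
    (h1 : c + (ω₁^2 + k) * b - k * a * b = 0)
    (h2 : a - γ₁ * b + k * b^2 - d = 0)
    (h3 : (ω₂^2 + k) * a - k + γ₂ * c - (ω₁^2 + k) * d + k * a * d = 0)
    (h4 : (ω₂^2 + k) * b + γ₂ * d + c - γ₁ * d + k * b * d = 0) :
    ∀ ξ : ℂ,
      aeval ξ (Matrix.charpoly (!![0, 1;
        -(ω₁^2 + k * (1 - a)), -(γ₁ - k * b)] : Matrix (Fin 2) (Fin 2) ℝ)) = 0 →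
      aeval ξ (Matrix.charpoly (!![0, 1, 0, 0;
        -ω₁^2 - k, -γ₁, k, 0;
        0, 0, 0, 1;
        k, 0, -ω₂^2 - k, -γ₂] : Matrix (Fin 4) (Fin 4) ℝ)) = 0 := by
  intro ξ hξ
  have h1c : (c:ℂ) + ((ω₁:ℂ)^2 + k) * b - k * a * b = 0 := by exact_mod_cast congrArg (Complex.ofReal) h1
  have h2c : (a:ℂ) - γ₁ * b + k * b^2 - d = 0 := by exact_mod_cast congrArg (Complex.ofReal) h2
  have h3c : ((ω₂:ℂ)^2 + k) * a - k + γ₂ * c - ((ω₁:ℂ)^2 + k) * d + k * a * d = 0 := by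
    exact_mod_cast congrArg (Complex.ofReal) h3
  have h4c : ((ω₂:ℂ)^2 + k) * b + γ₂ * d + c - γ₁ * d + k * b * d = 0 := by
    exact_mod_cast congrArg (Complex.ofReal) h4
  rw [Matrix.charpoly, Matrix.det_fin_two] at hξ
  simp [Matrix.charmatrix_apply] at hξ
  push_cast at hξ
  rw [Matrix.charpoly, my_det_fin_four]
  simp [Matrix.charmatrix_apply, Matrix.vecHead, Matrix.vecTail]
  push_cast
  linear_combination (ξ^2 + ((γ₂:ℂ) + k*b)*ξ + ((ω₂:ℂ)^2 + k + k*d + k*b*γ₂)) * hξ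
    + (k*ξ^2 + k*γ₂*ξ)*h2c + k*ξ*h4c - (k*ξ + k*γ₂)*h1c + k*h3c
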